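/- Suppose a bilinear polynomial map p(X,Y) over a field (e.g. matrix multiplication of n×n matrices) is computed as p(X,Y) = C(a(X), b(Y)) where a, b are arbitrary (not necessarily polynomial-size) polynomial maps of the inputs X and Y respectively, and C is computed by an arithmetic circuit using t multiplication gates (and arbitrary linear operations). Then the bilinear part of p has a representation as a sum of at most 2t products of (a linear form in X) times (a linear form in Y); in particular, if p is n×n matrix multiplication then t ≥ R(n)/2, where R(n) is the tensor rank of n×n matrix multiplication. -/

import Mathlib

open MvPolynomial

/-- The bilinear part of a polynomial in `X`-variables (left summand) and
`Y`-variables (right summand): the sum of its monomials of the form `x·y`. -/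
noncomputable def abPart {ι₁ ι₂ F : Type} [Fintype ι₁] [Fintype ι₂] [Field F]
    (p : MvPolynomial (ι₁ ⊕ ι₂) F) : MvPolynomial (ι₁ ⊕ ι₂) F :=
  ∑ x : ι₁, ∑ y : ι₂,
    MvPolynomial.monomial
      (Finsupp.single (Sum.inl x) 1 + Finsupp.single (Sum.inr y) 1)
      (p.coeff (Finsupp.single (Sum.inl x) 1 + Finsupp.single (Sum.inr y) 1))

/-- A linear form in the `X`-variables. -/
noncomputable def linX {ι₁ ι₂ F : Type} [Fintype ι₁] [Field F]
    (L : ι₁ → F) : MvPolynomial (ι₁ ⊕ ι₂) F :=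
  ∑ x : ι₁, MvPolynomial.C (L x) * MvPolynomial.X (Sum.inl x)

/-- A linear form in the `Y`-variables. -/
noncomputable def linY {ι₁ ι₂ F : Type} [Fintype ι₂] [Field F]
    (M : ι₂ → F) : MvPolynomial (ι₁ ⊕ ι₂) F :=
  ∑ y : ι₂, MvPolynomial.C (M y) * MvPolynomial.X (Sum.inr y)

/-- The `(i,j)` entry of the product of two `n × n` matrices of indeterminates. -/
noncomputable def MMpoly (n : ℕ) (F : Type) [Field F] (i j : Fin n) :
    MvPolynomial ((Fin n × Fin n) ⊕ (Fin n × Fin n)) F :=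
  ∑ kk : Fin n, MvPolynomial.X (Sum.inl (i, kk)) * MvPolynomial.X (Sum.inr (kk, j))

/-- The tensor rank of `n × n` matrix multiplication: the least `r` such that every
entry of the matrix product is an `F`-linear combination of `r` fixed products of a
linear form in the `X` entries times a linear form in the `Y` entries. -/
noncomputable def matmulRank (n : ℕ) (F : Type) [Field F] : ℕ :=
  sInf {r | ∃ (L M : Fin r → Fin n × Fin n → F) (w : Fin n → Fin n → Fin r → F),
    ∀ i j, MMpoly n F i j =
      ∑ s, MvPolynomial.C (w i j s) * (linX (L s) * linY (M s))}

variable {ι₁ ι₂ : Type} [DecidableEq ι₁] [DecidableEq ι₂]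

local notation "sx" x => Finsupp.single (Sum.inl x : ι₁ ⊕ ι₂) 1
local notation "sy" y => Finsupp.single (Sum.inr y : ι₁ ⊕ ι₂) 1

lemma eq_sum_single_of_add_eq {x : ι₁} {y : ι₂} {d e : (ι₁ ⊕ ι₂) →₀ ℕ}
    (h : d + e = (sx x) + (sy y)) (a b : ℕ) (hx : d (Sum.inl x) = a) (hy : d (Sum.inr y) = b) :
    d = Finsupp.single (Sum.inl x) a + Finsupp.single (Sum.inr y) b := by
  ext v
  have hv := DFunLike.congr_fun h v
  simp only [Finsupp.add_apply, Finsupp.single_apply] at hv ⊢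
  rcases v with x' | y'
  · by_cases hxx : x = x'
    · subst hxx; simpa [hx] using rfl
    · split_ifs at hv ⊢ <;> first | omega | simp_all
  · by_cases hyy : y = y'
    · subst hyy; simpa [hy] using rfl
    · split_ifs at hv ⊢ <;> first | omega | simp_all

lemma antidiagonal_pair (x : ι₁) (y : ι₂) :
    Finset.HasAntidiagonal.antidiagonal ((sx x) + (sy y)) =
      {((0 : (ι₁ ⊕ ι₂) →₀ ℕ), (sx x) + (sy y)), (sx x, sy y), (sy y, sx x), ((sx x) + (sy y), 0)} := by
  ext ⟨d, e⟩
  simp only [Finset.HasAntidiagonal.mem_antidiagonal, Finset.mem_insert, Finset.mem_singleton, Prod.mk.injEq]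
  constructor
  · intro h
    have h1 : d (Sum.inl x) + e (Sum.inl x) = 1 := by
      have := DFunLike.congr_fun h (Sum.inl x); simpa using this
    have h2 : d (Sum.inr y) + e (Sum.inr y) = 1 := by
      have := DFunLike.congr_fun h (Sum.inr y); simpa using this
    rcases Nat.add_eq_one_iff.mp h1 with ⟨ha, _⟩ | ⟨ha, _⟩ <;>
      rcases Nat.add_eq_one_iff.mp h2 with ⟨hb, _⟩ | ⟨hb, _⟩
    · have hd := eq_sum_single_of_add_eq h 0 0 ha hb
      simp only [Finsupp.single_zero, add_zero] at hd
      subst hd; left; exact ⟨rfl, by simpa using h⟩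
    · have hd := eq_sum_single_of_add_eq h 0 1 ha hb
      simp only [Finsupp.single_zero, zero_add] at hd
      subst hd
      right; right; left
      refine ⟨rfl, ?_⟩
      have h' : (sy y) + e = (sy y) + (sx x) := by rw [h, add_comm]
      exact add_left_cancel h'
    · have hd := eq_sum_single_of_add_eq h 1 0 ha hb
      simp only [Finsupp.single_zero, add_zero] at hd
      subst hd
      right; left
      exact ⟨rfl, add_left_cancel h⟩
    · have hd := eq_sum_single_of_add_eq h 1 1 ha hb
      subst hd
      right; right; right
      refine ⟨rfl, ?_⟩
      have h' : ((sx x) + (sy y)) + e = ((sx x) + (sy y)) + 0 := by simpa using h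
      exact add_left_cancel h'
  · rintro (⟨rfl, rfl⟩ | ⟨rfl, rfl⟩ | ⟨rfl, rfl⟩ | ⟨rfl, rfl⟩) <;> simp [add_comm]

variable {F : Type} [Field F]

lemma sx_ne_zero (x : ι₁) : (sx x) ≠ (0 : (ι₁ ⊕ ι₂) →₀ ℕ) :=
  by simp

lemma sy_ne_zero (y : ι₂) : (sy y) ≠ (0 : (ι₁ ⊕ ι₂) →₀ ℕ) :=
  by simp

lemma mm_ne_zero (x : ι₁) (y : ι₂) : ((sx x) + (sy y)) ≠ 0 := by
  intro h
  have := DFunLike.congr_fun h (Sum.inl x)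
  simp [Finsupp.single_apply] at this

lemma sx_ne_sy (x : ι₁) (y : ι₂) : (sx x) ≠ (sy y) := by
  intro h
  have := DFunLike.congr_fun h (Sum.inl x)
  simp [Finsupp.single_apply] at this

lemma mm_ne_sx (x : ι₁) (y : ι₂) : ((sx x) + (sy y)) ≠ (sx x) := by
  intro h
  have := DFunLike.congr_fun h (Sum.inr y)
  simp [Finsupp.single_apply] at this

lemma mm_ne_sy (x : ι₁) (y : ι₂) : ((sx x) + (sy y)) ≠ (sy y) := by
  intro h
  have := DFunLike.congr_fun h (Sum.inl x)
  simp [Finsupp.single_apply] at this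

lemma coeff_mul_pair (p q : MvPolynomial (ι₁ ⊕ ι₂) F) (x : ι₁) (y : ι₂) :
    coeff ((sx x) + (sy y)) (p * q) =
      coeff 0 p * coeff ((sx x) + (sy y)) q + coeff (sx x) p * coeff (sy y) q +
        coeff (sy y) p * coeff (sx x) q + coeff ((sx x) + (sy y)) p * coeff 0 q := by
  rw [MvPolynomial.coeff_mul, antidiagonal_pair]
  have h1 := sx_ne_zero (ι₂ := ι₂) x
  have h2 := sy_ne_zero (ι₁ := ι₁) y
  have h3 := mm_ne_zero x y
  have h4 := sx_ne_sy x y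
  have h5 := mm_ne_sx x y
  have h6 := mm_ne_sy x y
  rw [Finset.sum_insert, Finset.sum_insert, Finset.sum_insert, Finset.sum_singleton]
  · ring
  · simp only [Finset.mem_singleton]
    exact fun h => h6 (congrArg Prod.fst h).symm
  · simp only [Finset.mem_insert, Finset.mem_singleton, not_or]
    exact ⟨fun h => h4 (congrArg Prod.fst h), fun h => h5 (congrArg Prod.fst h).symm⟩
  · simp only [Finset.mem_insert, Finset.mem_singleton, not_or]
    exact ⟨fun h => h1 (congrArg Prod.fst h).symm, fun h => h2 (congrArg Prod.fst h).symm,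
      fun h => h3 (congrArg Prod.fst h).symm⟩

lemma coeff_zero_of_inl_vars {p : MvPolynomial (ι₁ ⊕ ι₂) F}
    (hp : ∀ v ∈ p.vars, ∃ x, v = Sum.inl x) {d : (ι₁ ⊕ ι₂) →₀ ℕ} {y : ι₂}
    (hd : d (Sum.inr y) ≠ 0) : coeff d p = 0 := by
  by_contra hc
  have hmem : d ∈ p.support := MvPolynomial.mem_support_iff.mpr hc
  have hv : (Sum.inr y : ι₁ ⊕ ι₂) ∈ p.vars :=
    (MvPolynomial.mem_vars _).mpr ⟨d, hmem, Finsupp.mem_support_iff.mpr hd⟩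
  obtain ⟨x, hx⟩ := hp _ hv
  simp at hx

lemma coeff_zero_of_inr_vars {p : MvPolynomial (ι₁ ⊕ ι₂) F}
    (hp : ∀ v ∈ p.vars, ∃ y, v = Sum.inr y) {d : (ι₁ ⊕ ι₂) →₀ ℕ} {x : ι₁}
    (hd : d (Sum.inl x) ≠ 0) : coeff d p = 0 := by
  by_contra hc
  have hmem : d ∈ p.support := MvPolynomial.mem_support_iff.mpr hc
  have hv : (Sum.inl x : ι₁ ⊕ ι₂) ∈ p.vars :=
    (MvPolynomial.mem_vars _).mpr ⟨d, hmem, Finsupp.mem_support_iff.mpr hd⟩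
  obtain ⟨y, hy⟩ := hp _ hv
  simp at hy

lemma sy_apply_inr (y : ι₂) : (sy y) (Sum.inr y) = 1 := by simp
lemma mm_apply_inr (x : ι₁) (y : ι₂) :
    (((sx x) + (sy y) : (ι₁ ⊕ ι₂) →₀ ℕ)) (Sum.inr y) = 1 := by
  simp [Finsupp.single_apply]
lemma sx_apply_inl (x : ι₁) : (sx x) (Sum.inl x) = 1 := by simp
lemma mm_apply_inl (x : ι₁) (y : ι₂) :
    (((sx x) + (sy y) : (ι₁ ⊕ ι₂) →₀ ℕ)) (Sum.inl x) = 1 := by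
  simp [Finsupp.single_apply]

section Fin
variable [Fintype ι₁] [Fintype ι₂]

lemma abPart_add (p q : MvPolynomial (ι₁ ⊕ ι₂) F) :
    abPart (p + q) = abPart p + abPart q := by
  simp [abPart, MvPolynomial.coeff_add, map_add, Finset.sum_add_distrib]

lemma abPart_zero : abPart (0 : MvPolynomial (ι₁ ⊕ ι₂) F) = 0 := by
  simp [abPart]

lemma abPart_sum {κ : Type*} (s : Finset κ) (f : κ → MvPolynomial (ι₁ ⊕ ι₂) F) :
    abPart (∑ k ∈ s, f k) = ∑ k ∈ s, abPart (f k) := by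
  classical
  induction s using Finset.induction_on with
  | empty => simp [abPart_zero]
  | insert _ _ h ih => rw [Finset.sum_insert h, Finset.sum_insert h, abPart_add, ih]

lemma mm_eq_iff (x x' : ι₁) (y y' : ι₂) :
    ((sx x) + (sy y)) = ((sx x') + (sy y')) ↔ x = x' ∧ y = y' := by
  constructor
  · intro h
    constructor
    · by_contra hx
      have h2 := DFunLike.congr_fun h (Sum.inl x)
      simp only [Finsupp.add_apply, Finsupp.single_apply] at h2
      split_ifs at h2 <;> simp_all
    · by_contra hy
      have h2 := DFunLike.congr_fun h (Sum.inr y)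
      simp only [Finsupp.add_apply, Finsupp.single_apply] at h2
      split_ifs at h2 <;> simp_all
  · rintro ⟨rfl, rfl⟩; rfl

lemma abPart_monomial_pair (x : ι₁) (y : ι₂) (c : F) :
    abPart (MvPolynomial.monomial ((sx x) + (sy y)) c) =
      MvPolynomial.monomial ((sx x) + (sy y)) c := by
  unfold abPart
  have : ∀ x' y', coeff ((sx x') + (sy y')) (MvPolynomial.monomial ((sx x) + (sy y)) c) =
      if x = x' ∧ y = y' then c else 0 := by
    intro x' y'
    rw [MvPolynomial.coeff_monomial]
    congr 1
    simp [mm_eq_iff]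
  simp only [this]
  rw [Finset.sum_eq_single x]
  · rw [Finset.sum_eq_single y]
    · simp
    · intro y' _ hy'; simp [Ne.symm hy']
    · intro h; exact absurd (Finset.mem_univ y) h
  · intro x' _ hx'
    simp [Ne.symm hx']
  · intro h; exact absurd (Finset.mem_univ x) h

lemma C_mul_linX_linY (w : F) (L : ι₁ → F) (M : ι₂ → F) :
    MvPolynomial.C w * (linX (ι₂ := ι₂) L * linY (ι₁ := ι₁) M) =
      ∑ x : ι₁, ∑ y : ι₂, MvPolynomial.monomial ((sx x) + (sy y)) (w * L x * M y) := by
  unfold linX linY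
  rw [Finset.sum_mul_sum, Finset.mul_sum]
  refine Finset.sum_congr rfl fun x _ => ?_
  rw [Finset.mul_sum]
  refine Finset.sum_congr rfl fun y _ => ?_
  simp only [MvPolynomial.X, MvPolynomial.C_apply, MvPolynomial.monomial_mul, one_mul,
    mul_one, zero_add, add_zero]
  rw [mul_assoc]

lemma abPart_eq_sum {r : ℕ} (p : MvPolynomial (ι₁ ⊕ ι₂) F) (w : Fin r → F)
    (L : Fin r → ι₁ → F) (M : Fin r → ι₂ → F)
    (h : ∀ x y, coeff ((sx x) + (sy y)) p = ∑ s, w s * L s x * M s y) :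
    abPart p = ∑ s, MvPolynomial.C (w s) * (linX (L s) * linY (M s)) := by
  unfold abPart
  simp only [C_mul_linX_linY, h, map_sum]
  exact (Finset.sum_congr rfl fun x _ => Finset.sum_comm).trans Finset.sum_comm

end Fin

lemma abPart_MMpoly (n : ℕ) (F : Type) [Field F] (i j : Fin n) :
    abPart (MMpoly n F i j) = MMpoly n F i j := by
  have hX : ∀ kk : Fin n,
      (MvPolynomial.X (Sum.inl (i, kk)) : MvPolynomial ((Fin n × Fin n) ⊕ (Fin n × Fin n)) F) *
        MvPolynomial.X (Sum.inr (kk, j)) =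
      MvPolynomial.monomial
        (Finsupp.single (Sum.inl (i, kk)) 1 + Finsupp.single (Sum.inr (kk, j)) 1) 1 := by
    intro kk
    rw [MvPolynomial.X, MvPolynomial.X, MvPolynomial.monomial_mul, one_mul]
  unfold MMpoly
  rw [abPart_sum]
  exact Finset.sum_congr rfl fun kk _ => by rw [hX, abPart_monomial_pair]

def half {t : ℕ} (s : Fin (2 * t)) : Fin t := ⟨s.val / 2, by omega⟩

lemma half_two_mul {t : ℕ} (g : Fin t) (h : 2 * g.val < 2 * t) :
    half (⟨2 * g.val, h⟩ : Fin (2 * t)) = g :=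
  Fin.ext (show 2 * g.val / 2 = g.val by omega)

lemma half_two_mul_add_one {t : ℕ} (g : Fin t) (h : 2 * g.val + 1 < 2 * t) :
    half (⟨2 * g.val + 1, h⟩ : Fin (2 * t)) = g :=
  Fin.ext (show (2 * g.val + 1) / 2 = g.val by omega)

noncomputable def combo {n k l t : ℕ} {F : Type} [Field F]
    (a : Fin k → MvPolynomial ((Fin n × Fin n) ⊕ (Fin n × Fin n)) F)
    (b : Fin l → MvPolynomial ((Fin n × Fin n) ⊕ (Fin n × Fin n)) F)
    (G : Fin t → MvPolynomial ((Fin n × Fin n) ⊕ (Fin n × Fin n)) F)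
    (cc : F) (αα : Fin k → F) (ββ : Fin l → F) (γγ : Fin t → F) :
    MvPolynomial ((Fin n × Fin n) ⊕ (Fin n × Fin n)) F :=
  MvPolynomial.C cc + ∑ i, MvPolynomial.C (αα i) * a i +
    ∑ j, MvPolynomial.C (ββ j) * b j + ∑ h, MvPolynomial.C (γγ h) * G h

/-- If a bilinear polynomial map `p(X,Y)` (e.g. `n × n` matrix
multiplication) is computed as `p(X,Y) = C(a(X), b(Y))` where `a, b` are arbitrary
polynomial maps of `X` resp. `Y`, and `C` is an arithmetic circuit (straight-line
program) using `t` multiplication gates `G` and arbitrary affine/linear operations,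
then the bilinear part of each output is a linear combination of at most `2t`
products of (a linear form in `X`) times (a linear form in `Y`); in particular, if
the outputs are the entries of the `n × n` matrix product then `2t ≥ R(n)`, the
tensor rank of matrix multiplication. -/
theorem stmt3 (n t : ℕ) (F : Type) [Field F] (k l : ℕ)
    (a : Fin k → MvPolynomial ((Fin n × Fin n) ⊕ (Fin n × Fin n)) F)
    (b : Fin l → MvPolynomial ((Fin n × Fin n) ⊕ (Fin n × Fin n)) F)
    (ha : ∀ i, ∀ v ∈ (a i).vars, ∃ x, v = Sum.inl x)
    (hb : ∀ j, ∀ v ∈ (b j).vars, ∃ y, v = Sum.inr y)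
    (G : Fin t → MvPolynomial ((Fin n × Fin n) ⊕ (Fin n × Fin n)) F)
    (hG : ∀ g : Fin t, ∃ (c c' : F) (α α' : Fin k → F) (β β' : Fin l → F)
        (γ γ' : Fin t → F),
      (∀ h : Fin t, g ≤ h → γ h = 0 ∧ γ' h = 0) ∧
      G g =
        (MvPolynomial.C c + ∑ i, MvPolynomial.C (α i) * a i +
            ∑ j, MvPolynomial.C (β j) * b j + ∑ h, MvPolynomial.C (γ h) * G h) *
        (MvPolynomial.C c' + ∑ i, MvPolynomial.C (α' i) * a i +
            ∑ j, MvPolynomial.C (β' j) * b j + ∑ h, MvPolynomial.C (γ' h) * G h))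
    (out : Fin n → Fin n → MvPolynomial ((Fin n × Fin n) ⊕ (Fin n × Fin n)) F)
    (hout : ∀ i j, ∃ (c : F) (α : Fin k → F) (β : Fin l → F) (γ : Fin t → F),
      out i j = MvPolynomial.C c + ∑ i', MvPolynomial.C (α i') * a i' +
        ∑ j', MvPolynomial.C (β j') * b j' + ∑ h, MvPolynomial.C (γ h) * G h) :
    (∃ (L M : Fin (2 * t) → Fin n × Fin n → F)
        (w : Fin n → Fin n → Fin (2 * t) → F),
      ∀ i j, abPart (out i j) =
        ∑ s, MvPolynomial.C (w i j s) * (linX (L s) * linY (M s))) ∧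
    ((∀ i j, out i j = MMpoly n F i j) → matmulRank n F ≤ 2 * t) := by
  classical
  choose c c' α α' β β' γ γ' hγ hGeq using hG
  choose oc oα oβ oγ houteq using hout
  set UU : Fin t → MvPolynomial ((Fin n × Fin n) ⊕ (Fin n × Fin n)) F :=
    fun g => combo a b G (c g) (α g) (β g) (γ g) with hUU
  set VV : Fin t → MvPolynomial ((Fin n × Fin n) ⊕ (Fin n × Fin n)) F :=
    fun g => combo a b G (c' g) (α' g) (β' g) (γ' g) with hVV
  have hGc : ∀ g, G g = UU g * VV g := by
    intro g
    simp only [hUU, hVV, combo]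
    exact hGeq g
  have hcomb : ∀ (cc : F) (αα : Fin k → F) (ββ : Fin l → F) (γγ : Fin t → F)
      (x y : Fin n × Fin n),
      MvPolynomial.coeff (Finsupp.single (Sum.inl x) 1 + Finsupp.single (Sum.inr y) 1)
        (combo a b G cc αα ββ γγ) =
      ∑ h, γγ h * MvPolynomial.coeff
        (Finsupp.single (Sum.inl x) 1 + Finsupp.single (Sum.inr y) 1) (G h) := by
    intro cc αα ββ γγ x y
    have ha0 : ∀ i, MvPolynomial.coeff
        (Finsupp.single (Sum.inl x) 1 + Finsupp.single (Sum.inr y) 1) (a i) = 0 :=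
      fun i => coeff_zero_of_inl_vars (ha i) (y := y)
        (by rw [mm_apply_inr]; exact one_ne_zero)
    have hb0 : ∀ j, MvPolynomial.coeff
        (Finsupp.single (Sum.inl x) 1 + Finsupp.single (Sum.inr y) 1) (b j) = 0 :=
      fun j => coeff_zero_of_inr_vars (hb j) (x := x)
        (by rw [mm_apply_inl]; exact one_ne_zero)
    simp [combo, MvPolynomial.coeff_sum, MvPolynomial.coeff_C_mul, ha0, hb0,
      MvPolynomial.coeff_C, mm_ne_zero x y, Ne.symm (mm_ne_zero x y)]
  set L : Fin (2 * t) → Fin n × Fin n → F := fun s z =>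
    if s.val % 2 = 0 then
      MvPolynomial.coeff (Finsupp.single (Sum.inl z) 1) (UU (half s))
    else
      MvPolynomial.coeff (Finsupp.single (Sum.inl z) 1) (VV (half s)) with hL
  set M : Fin (2 * t) → Fin n × Fin n → F := fun s z =>
    if s.val % 2 = 0 then
      MvPolynomial.coeff (Finsupp.single (Sum.inr z) 1) (VV (half s))
    else
      MvPolynomial.coeff (Finsupp.single (Sum.inr z) 1) (UU (half s)) with hM
  have key : ∀ N (g : Fin t), g.val < N →
      ∃ w : Fin (2 * t) → F, (∀ s : Fin (2 * t), 2 * g.val + 2 ≤ s.val → w s = 0) ∧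
        ∀ x y : Fin n × Fin n,
          MvPolynomial.coeff
              (Finsupp.single (Sum.inl x) 1 + Finsupp.single (Sum.inr y) 1) (G g) =
            ∑ s, w s * L s x * M s y := by
    intro N
    induction N with
    | zero => exact fun g hg => absurd hg (by omega)
    | succ N ih =>
      intro g hg
      rcases (by omega : g.val < N ∨ g.val = N) with hgN | hgeq
      · exact ih g hgN
      · choose Wf hW1 hW2 using ih
        set W : Fin t → Fin (2 * t) → F :=
          fun h s => if hh : h.val < N then Wf h hh s else 0 with hW
        have hWzero : ∀ (h : Fin t) (s : Fin (2 * t)),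
            2 * h.val + 2 ≤ s.val → W h s = 0 := by
          intro h s hs
          simp only [hW]
          split
          · exact hW1 h _ s hs
          · rfl
        have hWcoeff : ∀ (δ : Fin t → F), (∀ h : Fin t, g ≤ h → δ h = 0) →
            ∀ x y : Fin n × Fin n,
            ∑ h, δ h * MvPolynomial.coeff
              (Finsupp.single (Sum.inl x) 1 + Finsupp.single (Sum.inr y) 1) (G h) =
            ∑ s, (∑ h, δ h * W h s) * L s x * M s y := by
          intro δ hδ x y
          have step : ∀ h : Fin t,
              δ h * MvPolynomial.coeff
                (Finsupp.single (Sum.inl x) 1 + Finsupp.single (Sum.inr y) 1) (G h) =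
              δ h * ∑ s, W h s * L s x * M s y := by
            intro h
            by_cases hh : h.val < N
            · congr 1
              rw [hW2 h hh x y]
              refine Finset.sum_congr rfl fun s _ => ?_
              simp only [hW]
              rw [dif_pos hh]
            · have hδ0 : δ h = 0 := hδ h (Fin.le_def.mpr (by omega))
              rw [hδ0, zero_mul, zero_mul]
          rw [Finset.sum_congr rfl fun h _ => step h]
          simp only [Finset.mul_sum]
          rw [Finset.sum_comm]
          refine Finset.sum_congr rfl fun s _ => ?_
          rw [Finset.sum_mul, Finset.sum_mul]
          exact Finset.sum_congr rfl fun h _ => by ring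
        have h2g : 2 * g.val < 2 * t := by have := g.isLt; omega
        have h2g1 : 2 * g.val + 1 < 2 * t := by have := g.isLt; omega
        set w : Fin (2 * t) → F := fun s =>
            MvPolynomial.coeff 0 (UU g) * (∑ h, γ' g h * W h s) +
            (if s.val = 2 * g.val then 1 else 0) +
            (if s.val = 2 * g.val + 1 then 1 else 0) +
            (∑ h, γ g h * W h s) * MvPolynomial.coeff 0 (VV g) with hwdef
        refine ⟨w, ?_, ?_⟩
        · intro s hs
          simp only [hwdef]
          have hz : ∀ δ : Fin t → F, ∑ h, δ h * W h s = 0 := by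
            intro δ
            refine Finset.sum_eq_zero fun h _ => ?_
            rcases lt_or_ge h.val N with hh | hh
            · rw [hWzero h s (by omega), mul_zero]
            · simp only [hW]
              rw [dif_neg (by omega), mul_zero]
          rw [hz, hz, if_neg (by omega), if_neg (by omega), mul_zero, zero_mul]
          ring
        · intro x y
          have hU : MvPolynomial.coeff
              (Finsupp.single (Sum.inl x) 1 + Finsupp.single (Sum.inr y) 1) (UU g) =
              ∑ s, (∑ h, γ g h * W h s) * L s x * M s y := by
            simp only [hUU]
            rw [hcomb]
            exact hWcoeff (γ g) (fun h hh => (hγ g h hh).1) x y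
          have hV : MvPolynomial.coeff
              (Finsupp.single (Sum.inl x) 1 + Finsupp.single (Sum.inr y) 1) (VV g) =
              ∑ s, (∑ h, γ' g h * W h s) * L s x * M s y := by
            simp only [hVV]
            rw [hcomb]
            exact hWcoeff (γ' g) (fun h hh => (hγ g h hh).2) x y
          have hLg : L ⟨2 * g.val, h2g⟩ x =
              MvPolynomial.coeff (Finsupp.single (Sum.inl x) 1) (UU g) := by
            simp only [hL]
            rw [if_pos (by omega : 2 * g.val % 2 = 0), half_two_mul]
          have hMg : M ⟨2 * g.val, h2g⟩ y =
              MvPolynomial.coeff (Finsupp.single (Sum.inr y) 1) (VV g) := by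
            simp only [hM]
            rw [if_pos (by omega : 2 * g.val % 2 = 0), half_two_mul]
          have hLg1 : L ⟨2 * g.val + 1, h2g1⟩ x =
              MvPolynomial.coeff (Finsupp.single (Sum.inl x) 1) (VV g) := by
            simp only [hL]
            rw [if_neg (by omega : ¬(2 * g.val + 1) % 2 = 0), half_two_mul_add_one]
          have hMg1 : M ⟨2 * g.val + 1, h2g1⟩ y =
              MvPolynomial.coeff (Finsupp.single (Sum.inr y) 1) (UU g) := by
            simp only [hM]
            rw [if_neg (by omega : ¬(2 * g.val + 1) % 2 = 0), half_two_mul_add_one]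
          rw [hGc g, coeff_mul_pair, hU, hV]
          simp only [hwdef]
          have hsplit : ∀ s : Fin (2 * t),
              (MvPolynomial.coeff 0 (UU g) * (∑ h, γ' g h * W h s) +
                (if s.val = 2 * g.val then (1 : F) else 0) +
                (if s.val = 2 * g.val + 1 then (1 : F) else 0) +
                (∑ h, γ g h * W h s) * MvPolynomial.coeff 0 (VV g)) * L s x * M s y =
              MvPolynomial.coeff 0 (UU g) * ((∑ h, γ' g h * W h s) * L s x * M s y) +
              (if s.val = 2 * g.val then L s x * M s y else 0) +
              (if s.val = 2 * g.val + 1 then L s x * M s y else 0) +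
              ((∑ h, γ g h * W h s) * L s x * M s y) *
                MvPolynomial.coeff 0 (VV g) := by
            intro s
            split_ifs <;> ring
          rw [Finset.sum_congr rfl fun s _ => hsplit s]
          rw [Finset.sum_add_distrib, Finset.sum_add_distrib, Finset.sum_add_distrib,
            ← Finset.mul_sum, ← Finset.sum_mul]
          have e2 : ∑ s : Fin (2 * t),
              (if s.val = 2 * g.val then L s x * M s y else 0) =
              L ⟨2 * g.val, h2g⟩ x * M ⟨2 * g.val, h2g⟩ y := by
            rw [Finset.sum_eq_single (⟨2 * g.val, h2g⟩ : Fin (2 * t))]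
            · rw [if_pos rfl]
            · intro s _ hs
              rw [if_neg (fun hc => hs (Fin.ext hc))]
            · intro hmem
              exact absurd (Finset.mem_univ _) hmem
          have e3 : ∑ s : Fin (2 * t),
              (if s.val = 2 * g.val + 1 then L s x * M s y else 0) =
              L ⟨2 * g.val + 1, h2g1⟩ x * M ⟨2 * g.val + 1, h2g1⟩ y := by
            rw [Finset.sum_eq_single (⟨2 * g.val + 1, h2g1⟩ : Fin (2 * t))]
            · rw [if_pos rfl]
            · intro s _ hs
              rw [if_neg (fun hc => hs (Fin.ext hc))]
            · intro hmem
              exact absurd (Finset.mem_univ _) hmem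
          rw [e2, e3, hLg, hMg, hLg1, hMg1]
          ring
  choose Wall hWall1 hWall2 using fun h : Fin t => key t h h.isLt
  have hmain : ∀ i j, abPart (out i j) =
      ∑ s, MvPolynomial.C (∑ h, oγ i j h * Wall h s) * (linX (L s) * linY (M s)) := by
    intro i j
    apply abPart_eq_sum
    intro x y
    rw [houteq i j]
    rw [show (MvPolynomial.C (oc i j) + ∑ i', MvPolynomial.C (oα i j i') * a i' +
        ∑ j', MvPolynomial.C (oβ i j j') * b j' +
        ∑ h, MvPolynomial.C (oγ i j h) * G h) =
      combo a b G (oc i j) (oα i j) (oβ i j) (oγ i j) from rfl]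
    rw [hcomb]
    have step : ∀ h : Fin t,
        oγ i j h * MvPolynomial.coeff
          (Finsupp.single (Sum.inl x) 1 + Finsupp.single (Sum.inr y) 1) (G h) =
        oγ i j h * ∑ s, Wall h s * L s x * M s y := fun h => by rw [hWall2 h x y]
    rw [Finset.sum_congr rfl fun h _ => step h]
    simp only [Finset.mul_sum]
    rw [Finset.sum_comm]
    refine Finset.sum_congr rfl fun s _ => ?_
    rw [Finset.sum_mul, Finset.sum_mul]
    exact Finset.sum_congr rfl fun h _ => by ring
  refine ⟨⟨L, M, fun i j s => ∑ h, oγ i j h * Wall h s, hmain⟩, ?_⟩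
  intro hMM
  refine Nat.sInf_le ⟨L, M, fun i j s => ∑ h, oγ i j h * Wall h s, fun i j => ?_⟩
  rw [← abPart_MMpoly n F i j, ← hMM i j]
  exact hmain i j
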